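/- Let p be a real number with 1/2 < p ≤ 1, let k ≥ 3 be a natural number, and let v_0, v_1, ..., v_k be real numbers satisfying: v_k = 1; v_k = p·v_{k−1}; v_{k−1} = p·v_{k−2}; v_j = (1−p)·v_{j+1} + p·v_{j−1} for all j with 2 ≤ j ≤ k−2; v_1 = v_0 + (1−p)·v_2; and v_0 = 1 + (1−p)·v_1. Then v_j ≤ 1/(2p−1) for every j with 0 ≤ j ≤ k. -/

import Mathlib

/-- Expected numbers of visits of the Markov chain `M̂(p,k)`: if
`1/2 < p ≤ 1`, `k ≥ 3`, and `v 0, …, v k` satisfy the listed linear system, then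
`v j ≤ 1/(2p - 1)` for every `j ≤ k`. -/
theorem markov_visits_le (p : ℝ) (hp₁ : 1 / 2 < p) (hp₂ : p ≤ 1)
    (k : ℕ) (hk : 3 ≤ k) (v : ℕ → ℝ)
    (h1 : v k = 1)
    (h2 : v k = p * v (k - 1))
    (h3 : v (k - 1) = p * v (k - 2))
    (h4 : ∀ j, 2 ≤ j → j ≤ k - 2 → v j = (1 - p) * v (j + 1) + p * v (j - 1))
    (h5 : v 1 = v 0 + (1 - p) * v 2)
    (h6 : v 0 = 1 + (1 - p) * v 1) :
    ∀ j ≤ k, v j ≤ 1 / (2 * p - 1) := by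
  have hp0 : 0 < p := by linarith
  have h2p : 0 < 2 * p - 1 := by linarith
  have hq0 : (0:ℝ) ≤ (1 - p) / p := div_nonneg (by linarith) hp0.le
  have hq1 : (1 - p) / p < 1 := by
    rw [div_lt_one hp0]; linarith
  have F : ∀ i, 1 ≤ i → i ≤ k - 1 →
      v (k - i) = (1 - ((1 - p) / p) ^ i) / (2 * p - 1) := by
    intro i
    induction i using Nat.strong_induction_on with
    | _ i ih =>
      intro h1i hik
      match i, h1i with
      | 1, _ =>
        have hv : p * v (k - 1) = 1 := by rw [← h2, h1]
        have : v (k - 1) = 1 / p := by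
          field_simp
          linarith [hv]
        rw [this]
        have h2p' : p * 2 - 1 ≠ 0 := by linarith
        field_simp
        ring
      | 2, _ =>
        have hv : p * v (k - 1) = 1 := by rw [← h2, h1]
        have hv2 : p * (p * v (k - 2)) = 1 := by rw [← h3]; exact hv
        have : v (k - 2) = 1 / (p * p) := by
          field_simp; linarith [hv2]
        rw [this]
        have h2p' : p * 2 - 1 ≠ 0 := by linarith
        field_simp
        ring
      | (n + 3), _ =>
        set i := n + 3 with hi
        have hik' : i ≤ k := by omega
        have hE := h4 (k - i + 1) (by omega) (by omega)
        have e1 : k - i + 1 + 1 = k - (i - 2) := by omega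
        have e2 : k - i + 1 - 1 = k - i := by omega
        have e3 : k - i + 1 = k - (i - 1) := by omega
        rw [e1, e2, e3] at hE
        have hA : v (k - (i - 1)) = (1 - ((1 - p) / p) ^ (i - 1)) / (2 * p - 1) :=
          ih (i - 1) (by omega) (by omega) (by omega)
        have hB : v (k - (i - 2)) = (1 - ((1 - p) / p) ^ (i - 2)) / (2 * p - 1) :=
          ih (i - 2) (by omega) (by omega) (by omega)
        rw [hA, hB] at hE
        have ei : i = (i - 2) + 2 := by omega
        have ei1 : i - 1 = (i - 2) + 1 := by omega
        rw [ei1, pow_succ] at hE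
        have hgoal : p * v (k - i) =
            (1 - ((1 - p) / p) ^ (i - 2) * ((1 - p) / p)) / (2 * p - 1)
              - (1 - p) * ((1 - ((1 - p) / p) ^ (i - 2)) / (2 * p - 1)) := by
          linarith [hE]
        rw [show ((1 - p) / p) ^ i = ((1 - p) / p) ^ (i - 2) * ((1 - p) / p) ^ 2 by
          rw [← pow_add, ← ei]]
        have hp' : p ≠ 0 := hp0.ne'
        have h2p' : (2 * p - 1) ≠ 0 := h2p.ne'
        generalize ((1 - p) / p) ^ (i - 2) = A at hE ⊢
        field_simp at hE
        have key : v (k - i) * (p ^ 2 * (2 * p - 1) ^ 3) =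
            (p ^ 2 - A * (1 - p) ^ 2) * (2 * p - 1) ^ 2 := by
          have h2p'' : p * 2 - 1 ≠ 0 := by linarith
          field_simp at hE
          linear_combination (-(2 * p - 1) ^ 2) * hE
        have hD3 : (p ^ 2 * (2 * p - 1) ^ 3) ≠ 0 := by positivity
        have hv : v (k - i) =
            ((p ^ 2 - A * (1 - p) ^ 2) * (2 * p - 1) ^ 2) / (p ^ 2 * (2 * p - 1) ^ 3) :=
          eq_div_of_mul_eq hD3 key
        rw [hv]
        field_simp
  intro j hj
  rcases eq_or_lt_of_le hj with hkj | hjlt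
  · -- j = k
    rw [hkj, h1]
    rw [le_div_iff₀ h2p]
    linarith
  · rcases Nat.eq_zero_or_pos j with hj0 | hj1
    · -- j = 0
      subst hj0
      have hv1 : v 1 = (1 - ((1 - p) / p) ^ (k - 1)) / (2 * p - 1) := by
        have := F (k - 1) (by omega) (by omega)
        rwa [show k - (k - 1) = 1 by omega] at this
      have hv2 : v 2 = (1 - ((1 - p) / p) ^ (k - 2)) / (2 * p - 1) := by
        have := F (k - 2) (by omega) (by omega)
        rwa [show k - (k - 2) = 2 by omega] at this
      have hv2nn : 0 ≤ v 2 := by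
        rw [hv2]
        apply div_nonneg _ h2p.le
        have : ((1 - p) / p) ^ (k - 2) ≤ 1 := pow_le_one₀ hq0 hq1.le
        linarith
      have hv1le : v 1 ≤ 1 / (2 * p - 1) := by
        rw [hv1]
        have hnn : 0 ≤ ((1 - p) / p) ^ (k - 1) := pow_nonneg hq0 _
        rw [div_le_div_iff₀ h2p h2p]
        nlinarith [hnn, h2p]
      have : v 0 = v 1 - (1 - p) * v 2 := by linarith [h5]
      rw [this]
      have : 0 ≤ (1 - p) * v 2 := mul_nonneg (by linarith) hv2nn
      linarith
    · -- 1 ≤ j ≤ k - 1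
      have hF := F (k - j) (by omega) (by omega)
      rw [show k - (k - j) = j by omega] at hF
      rw [hF]
      have hnn : 0 ≤ ((1 - p) / p) ^ (k - j) := pow_nonneg hq0 _
      rw [div_le_div_iff₀ h2p h2p]
      nlinarith [hnn, h2p]
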